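/- arXiv:0712.4302 — 2 statements merged into one kernel-verified Lean document; each statement's English description precedes it below -/
import Mathlib

section
/- With h_{s,z} := T_{ψ,z}(e_s) as above (T_{ψ,z} an interpolation operator of norm c for p = 2), define F_{s,z}(w) := ψ(z,s) · h_{s,z}(w)² for w ∈ M'. Then each F_{s,z} ∈ H_{1,ψ}(M') and for every w ∈ M' one has Σ_{s∈S} (|F_{s,z}(w)|/ψ(z,s)) · ψ(w) ≤ c². -/
open Set
open scoped Manifold Topology ENNReal NNReal Classical

noncomputable section

/-- The weighted `ℓ^p` norm of `g` on the fibre `r ⁻¹' {x}` of a covering `r : N' → N`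
(the norm of the space `l_{p,ψ,x}`). -/
def fibLpNorm {N N' : Type*} (r : N' → N) (ψ : N' → ℝ) (p : ℝ≥0∞) (x : N)
    (g : N' → ℂ) : ℝ :=
  if p = ∞ then ⨆ y : r ⁻¹' {x}, ‖g ↑y‖ * ψ ↑y
  else (∑' y : r ⁻¹' {x}, ‖g ↑y‖ ^ p.toReal * ψ ↑y) ^ (1 / p.toReal)

/-- Membership in the space `l_{p,ψ,x}` of the fibre over `x`. -/
def MemFibLp {N N' : Type*} (r : N' → N) (ψ : N' → ℝ) (p : ℝ≥0∞) (x : N)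
    (g : N' → ℂ) : Prop :=
  if p = ∞ then BddAbove (range fun y : r ⁻¹' {x} => ‖g ↑y‖ * ψ ↑y)
  else Summable fun y : r ⁻¹' {x} => ‖g ↑y‖ ^ p.toReal * ψ ↑y

/-- The norm of the space `H_{p,ψ}(M')`: the sup over `x ∈ M` of the weighted `ℓ^p`
norms over the fibres `r ⁻¹' {x}`. -/
def covHpNorm {N N' : Type*} (r : N' → N) (ψ : N' → ℝ) (p : ℝ≥0∞) (M : Set N)
    (g : N' → ℂ) : ℝ :=
  ⨆ x : M, fibLpNorm r ψ p ↑x g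

/-- Membership in the space `H_{p,ψ}(M')` : `g` is holomorphic on `M' := r ⁻¹' M`,
its restriction to every fibre lies in `l_{p,ψ,x}`, and its `H_{p,ψ}` norm is finite. -/
def MemCovHp (H : Type*) [NormedAddCommGroup H] [NormedSpace ℂ H]
    {N N' : Type*} [TopologicalSpace N] [ChartedSpace H N]
    [TopologicalSpace N'] [ChartedSpace H N']
    (r : N' → N) (ψ : N' → ℝ) (p : ℝ≥0∞) (M : Set N) (g : N' → ℂ) : Prop :=
  MDifferentiableOn 𝓘(ℂ, H) 𝓘(ℂ, ℂ) g (r ⁻¹' M) ∧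
  (∀ x ∈ M, MemFibLp r ψ p x g) ∧
  BddAbove (range fun x : M => fibLpNorm r ψ p ↑x g)

/-- A relatively compact domain `M ⊂⊂ N` with smooth boundary which is strongly
pseudoconvex: `M = {ρ < 0}` for a `C²` function `ρ` defined near `closure M` with
`dρ ≠ 0` on the boundary, whose Levi form is positive on the complex tangent space
of the boundary.  (In a chart, the Levi form applied to `w` equals
`(1/4)(Hess ρ (w,w) + Hess ρ (i•w, i•w))`, and the complex tangency of `w` means
`dρ(w) = dρ(i•w) = 0`.) -/
def IsStronglyPseudoconvexDomain (H : Type*) [NormedAddCommGroup H] [NormedSpace ℂ H]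
    {N : Type*} [TopologicalSpace N] [ChartedSpace H N] (M : Set N) : Prop :=
  IsOpen M ∧ IsConnected M ∧ IsCompact (closure M) ∧
  ∃ (Ω : Set N) (ρ : N → ℝ), IsOpen Ω ∧ closure M ⊆ Ω ∧
    M = {z ∈ Ω | ρ z < 0} ∧
    (∀ z ∈ Ω, ContDiffAt ℝ 2 (fun u => ρ ((chartAt H z).symm u)) (chartAt H z z)) ∧
    (∀ z ∈ frontier M, fderiv ℝ (fun u => ρ ((chartAt H z).symm u)) (chartAt H z z) ≠ 0) ∧
    (∀ z ∈ frontier M, ∀ w : H, w ≠ 0 →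
      fderiv ℝ (fun u => ρ ((chartAt H z).symm u)) (chartAt H z z) w = 0 →
      fderiv ℝ (fun u => ρ ((chartAt H z).symm u)) (chartAt H z z) ((Complex.I : ℂ) • w) = 0 →
      0 < fderiv ℝ (fun u => fderiv ℝ (fun v => ρ ((chartAt H z).symm v)) u w)
            (chartAt H z z) w +
          fderiv ℝ (fun u => fderiv ℝ (fun v => ρ ((chartAt H z).symm v)) u
            ((Complex.I : ℂ) • w)) (chartAt H z z) ((Complex.I : ℂ) • w))

/-- An open subset which is a Stein manifold: it is holomorphically separable and
holomorphically convex (every compact subset has compact holomorphically convex hull). -/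
def IsSteinOpen (H : Type*) [NormedAddCommGroup H] [NormedSpace ℂ H]
    {N : Type*} [TopologicalSpace N] [ChartedSpace H N] (Ω : Set N) : Prop :=
  IsOpen Ω ∧
  (∀ x ∈ Ω, ∀ y ∈ Ω, x ≠ y →
    ∃ f : N → ℂ, MDifferentiableOn 𝓘(ℂ, H) 𝓘(ℂ, ℂ) f Ω ∧ f x ≠ f y) ∧
  (∀ K : Set N, K ⊆ Ω → IsCompact K →
    IsCompact {x ∈ Ω | ∀ f : N → ℂ, MDifferentiableOn 𝓘(ℂ, H) 𝓘(ℂ, ℂ) f Ω →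
      ‖f x‖ ≤ ⨆ y : K, ‖f ↑y‖})

/-- A holomorphically convex open subset: the holomorphically convex hull (with respect
to functions holomorphic on `V`) of every compact subset of `V` is compact. -/
def IsHolomorphicallyConvexOpen (H : Type*) [NormedAddCommGroup H] [NormedSpace ℂ H]
    {N : Type*} [TopologicalSpace N] [ChartedSpace H N] (V : Set N) : Prop :=
  IsOpen V ∧
  (∀ K : Set N, K ⊆ V → IsCompact K →
    IsCompact {x ∈ V | ∀ f : N → ℂ, MDifferentiableOn 𝓘(ℂ, H) 𝓘(ℂ, ℂ) f V →
      ‖f x‖ ≤ ⨆ y : K, ‖f ↑y‖})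

/-- A compact subset which is holomorphically convex in `M`: it coincides with its
holomorphically convex hull with respect to functions holomorphic on `M`. -/
def IsHolConvexCompactIn (H : Type*) [NormedAddCommGroup H] [NormedSpace ℂ H]
    {N : Type*} [TopologicalSpace N] [ChartedSpace H N] (M K : Set N) : Prop :=
  IsCompact K ∧ K ⊆ M ∧
  {x ∈ M | ∀ f : N → ℂ, MDifferentiableOn 𝓘(ℂ, H) 𝓘(ℂ, ℂ) f M →
    ‖f x‖ ≤ ⨆ y : K, ‖f ↑y‖} ⊆ K

/-- A compact complex subvariety of `M` of complex dimension `≥ 1`: a nonempty compact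
subset of `M`, without isolated points (which for analytic sets is equivalent to having
positive dimension at each point), which is locally the common zero set of a family of
holomorphic functions. -/
def IsCompactPosDimSubvariety (H : Type*) [NormedAddCommGroup H] [NormedSpace ℂ H]
    {N : Type*} [TopologicalSpace N] [ChartedSpace H N] (M A : Set N) : Prop :=
  A.Nonempty ∧ A ⊆ M ∧ IsCompact A ∧
  (∀ x ∈ A, x ∈ closure (A \ {x})) ∧
  (∀ x ∈ A, ∃ U : Set N, IsOpen U ∧ x ∈ U ∧
    ∃ F : Set (N → ℂ), (∀ f ∈ F, MDifferentiableOn 𝓘(ℂ, H) 𝓘(ℂ, ℂ) f U) ∧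
      A ∩ U = {y ∈ U | ∀ f ∈ F, f y = 0})

/-- `C_M`: the union of all compact complex subvarieties of `M` of complex
dimension `≥ 1`. -/
def varietyUnion (H : Type*) [NormedAddCommGroup H] [NormedSpace ℂ H]
    {N : Type*} [TopologicalSpace N] [ChartedSpace H N] (M : Set N) : Set N :=
  ⋃₀ {A : Set N | IsCompactPosDimSubvariety H M A}

/-- The inclusion `M ↪ N` induces an isomorphism of fundamental groups
(`π₁(M) = π₁(N)`): every loop in `N` based at a point of `M` is homotopic to a loop in
`M`, and loops in `M` which are homotopic in `N` are homotopic in `M`. -/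
def InducesPi1Iso {N : Type*} [TopologicalSpace N] (M : Set N) : Prop :=
  ∀ x₀ : M,
    (∀ γ : Path (x₀ : N) (x₀ : N),
      ∃ δ : Path x₀ x₀, Path.Homotopic γ (δ.map continuous_subtype_val)) ∧
    (∀ δ δ' : Path x₀ x₀,
      Path.Homotopic (δ.map continuous_subtype_val) (δ'.map continuous_subtype_val) →
      Path.Homotopic δ δ')

/-- A closed complex submanifold `Y` of an open set `V`: `Y ⊆ V` is closed in `V` and
is locally the zero set of a holomorphic submersion into some `ℂ^k`. -/
def IsClosedComplexSubmanifoldIn (H : Type*) [NormedAddCommGroup H] [NormedSpace ℂ H]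
    {N : Type*} [TopologicalSpace N] [ChartedSpace H N] (V Y : Set N) : Prop :=
  Y ⊆ V ∧ closure Y ∩ V ⊆ Y ∧
  ∀ y ∈ Y, ∃ (k : ℕ) (U : Set N) (f : N → (Fin k → ℂ)),
    IsOpen U ∧ y ∈ U ∧ U ⊆ V ∧
    MDifferentiableOn 𝓘(ℂ, H) 𝓘(ℂ, Fin k → ℂ) f U ∧
    Y ∩ U = {x ∈ U | f x = 0} ∧
    ∀ x ∈ Y ∩ U, Function.Surjective (mfderiv 𝓘(ℂ, H) 𝓘(ℂ, Fin k → ℂ) f x)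

/-- **Formulas (2.2)–(2.3).** Fix `z ∈ M \ C_M`, let `{e_s}` be the orthonormal basis
of `l_{2,ψ,z}(M')` (`e_s(t) = 0` for `t ≠ s`, `e_s(s) = ψ(s)^{-1/2}`), set
`h_{s,z} := T_{ψ,z}(e_s)` where `T_{ψ,z}` is a bounded linear interpolation operator
of norm `c` for `p = 2`, and define `F_{s,z}(w) := ψ(s)·h_{s,z}(w)²`.  Then each
`F_{s,z} ∈ H_{1,ψ}(M')`, and `Σ_s (|F_{s,z}(w)|/ψ(s))·ψ(w) ≤ c²` for all `w ∈ M'`. -/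
theorem squares_of_interpolated_basis
    (n : ℕ)
    {N : Type*} [TopologicalSpace N] [ChartedSpace (Fin n → ℂ) N]
    {N' : Type*} [MetricSpace N'] [ChartedSpace (Fin n → ℂ) N']
    (r : N' → N) (hr : IsCoveringMap r)
    (hrholo : MDifferentiable 𝓘(ℂ, Fin n → ℂ) 𝓘(ℂ, Fin n → ℂ) r)
    (M : Set N) (hM : IsStronglyPseudoconvexDomain (Fin n → ℂ) M)
    (ψ : N' → ℝ) (hψpos : ∀ y, 0 < ψ y)
    (hψuc : UniformContinuous fun y => Real.log (ψ y))
    (z : N) (hz : z ∈ M \ varietyUnion (Fin n → ℂ) M)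
    -- `T` is a bounded linear interpolation operator of norm `c` for `p = 2`
    (T : (N' → ℂ) → (N' → ℂ)) (c : ℝ) (hc : 0 ≤ c)
    (hTadd : ∀ h₁ h₂ : N' → ℂ, T (h₁ + h₂) = T h₁ + T h₂)
    (hTsmul : ∀ (a : ℂ) (h : N' → ℂ), T (a • h) = a • T h)
    (hT : ∀ h : N' → ℂ, MemFibLp r ψ 2 z h →
      MemCovHp (Fin n → ℂ) r ψ 2 M (T h) ∧
      covHpNorm r ψ 2 M (T h) ≤ c * fibLpNorm r ψ 2 z h ∧
      ∀ x ∈ r ⁻¹' {z}, T h x = h x)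
    -- `F_{s,z}(w) = ψ(z,s) h_{s,z}(w)²` where `h_{s,z} = T(e_s)`
    (F : r ⁻¹' {z} → N' → ℂ)
    (hF : ∀ (s : r ⁻¹' {z}) (w : N'),
      F s w = (ψ ↑s : ℂ) *
        (T (fun y => if y = ↑s then (((ψ ↑s) ^ (-(1/2) : ℝ) : ℝ) : ℂ) else 0) w) ^ 2) :
    (∀ s : r ⁻¹' {z}, MemCovHp (Fin n → ℂ) r ψ 1 M (F s)) ∧
    (∀ w ∈ r ⁻¹' M,
      Summable (fun s : r ⁻¹' {z} => ‖F s w‖ / ψ ↑s) ∧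
      (∑' s : r ⁻¹' {z}, ‖F s w‖ / ψ ↑s) * ψ w ≤ c ^ 2) := by
  classical
  have h2top : (2:ℝ≥0∞) ≠ ∞ := by norm_num
  have h1top : (1:ℝ≥0∞) ≠ ∞ := by norm_num
  have h2real : (2:ℝ≥0∞).toReal = (2:ℝ) := by norm_num
  set e : r ⁻¹' {z} → N' → ℂ :=
    fun s y => if y = ↑s then (((ψ ↑s) ^ (-(1/2) : ℝ) : ℝ) : ℂ) else 0 with he_def
  -- pointwise values of a finite linear combination of the `e s` on the fibre over `z`
  have combo_pt : ∀ (A : Finset (r ⁻¹' {z})) (a : r ⁻¹' {z} → ℂ) (y : r ⁻¹' {z}),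
      ‖∑ s ∈ A, a s * e s ↑y‖ ^ (2:ℝ) * ψ ↑y = if y ∈ A then ‖a y‖ ^ 2 else 0 := by
    intro A a y
    have hterm : ∀ s ∈ A, a s * e s ↑y
        = if y = s then a s * (((ψ ↑s) ^ (-(1/2) : ℝ) : ℝ) : ℂ) else 0 := by
      intro s _
      by_cases hys : y = s
      · subst hys; simp [he_def]
      · have hne : (↑y : N') ≠ ↑s := fun hcc => hys (Subtype.ext hcc)
        simp [he_def, hne, hys]
    rw [Finset.sum_congr rfl hterm, Finset.sum_ite_eq]
    by_cases hyA : y ∈ A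
    · rw [if_pos hyA, if_pos hyA]
      have hψy := hψpos (↑y : N')
      have hr0 : (0:ℝ) ≤ (ψ ↑y) ^ (-(1/2) : ℝ) := Real.rpow_nonneg hψy.le _
      rw [Real.rpow_two, norm_mul, Complex.norm_real, Real.norm_of_nonneg hr0, mul_pow]
      have hkey : ((ψ ↑y) ^ (-(1/2) : ℝ)) ^ (2:ℕ) * ψ ↑y = 1 := by
        rw [← Real.rpow_natCast ((ψ ↑y) ^ (-(1/2) : ℝ)) 2, ← Real.rpow_mul hψy.le]
        norm_num
        rw [Real.rpow_neg_one]
        exact inv_mul_cancel₀ hψy.ne'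
      calc ‖a y‖ ^ 2 * ((ψ ↑y) ^ (-(1/2) : ℝ)) ^ 2 * ψ ↑y
          = ‖a y‖ ^ 2 * (((ψ ↑y) ^ (-(1/2) : ℝ)) ^ (2:ℕ) * ψ ↑y) := by ring
        _ = ‖a y‖ ^ 2 := by rw [hkey, mul_one]
    · rw [if_neg hyA, if_neg hyA, norm_zero]
      rw [Real.rpow_two]
      simp
  have combo_mem : ∀ (A : Finset (r ⁻¹' {z})) (a : r ⁻¹' {z} → ℂ),
      MemFibLp r ψ 2 z (fun y => ∑ s ∈ A, a s * e s y) := by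
    intro A a
    simp only [MemFibLp, if_neg h2top, h2real]
    exact summable_of_ne_finset_zero (s := A) fun y hy => by
      rw [combo_pt A a y, if_neg hy]
  have combo_norm : ∀ (A : Finset (r ⁻¹' {z})) (a : r ⁻¹' {z} → ℂ),
      fibLpNorm r ψ 2 z (fun y => ∑ s ∈ A, a s * e s y)
        = (∑ s ∈ A, ‖a s‖ ^ 2) ^ ((1:ℝ)/2) := by
    intro A a
    simp only [fibLpNorm, if_neg h2top, h2real]
    congr 1
    rw [tsum_eq_sum (s := A) (fun y hy => by rw [combo_pt A a y, if_neg hy])]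
    exact Finset.sum_congr rfl fun s hs => by rw [combo_pt A a s, if_pos hs]
  -- T is linear on finite combinations
  have hT0 : T 0 = 0 := by
    have h0 := hTsmul 0 0
    simpa using h0
  have hTfin : ∀ (A : Finset (r ⁻¹' {z})) (a : r ⁻¹' {z} → ℂ),
      T (fun y => ∑ s ∈ A, a s * e s y) = fun w => ∑ s ∈ A, a s * T (e s) w := by
    intro A a
    induction A using Finset.induction_on with
    | empty =>
        have h0' : (fun y : N' => ∑ s ∈ (∅ : Finset (r ⁻¹' {z})), a s * e s y) = 0 := by
          funext y; simp
        rw [h0', hT0]; funext w; simp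
    | @insert t A' htA ih =>
        have hsplit : (fun y : N' => ∑ s ∈ insert t A', a s * e s y)
            = (a t • e t) + fun y => ∑ s ∈ A', a s * e s y := by
          funext y
          simp [Finset.sum_insert htA]
        rw [hsplit, hTadd, hTsmul, ih]
        funext w
        simp [Finset.sum_insert htA]
  -- facts about `e s`
  have he_eq : ∀ s : r ⁻¹' {z},
      (fun y => ∑ s' ∈ ({s} : Finset (r ⁻¹' {z})), (1:ℂ) * e s' y) = e s := by
    intro s; funext y; simp
  have he_mem : ∀ s : r ⁻¹' {z}, MemFibLp r ψ 2 z (e s) := fun s =>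
    he_eq s ▸ combo_mem {s} (fun _ => 1)
  have he_norm : ∀ s : r ⁻¹' {z}, fibLpNorm r ψ 2 z (e s) = 1 := by
    intro s
    rw [← he_eq s, combo_norm]
    simp
  -- basic facts about `fibLpNorm _ _ 2`
  have memfib2_iff : ∀ (g : N' → ℂ) (x : N), MemFibLp r ψ 2 x g ↔
      Summable (fun y : r ⁻¹' {x} => ‖g ↑y‖ ^ (2:ℝ) * ψ ↑y) := by
    intro g x
    simp only [MemFibLp, if_neg h2top, h2real]
  have fib_sq : ∀ (g : N' → ℂ) (x : N),
      (fibLpNorm r ψ 2 x g) ^ 2 = ∑' y : r ⁻¹' {x}, ‖g ↑y‖ ^ (2:ℝ) * ψ ↑y := by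
    intro g x
    simp only [fibLpNorm, if_neg h2top, h2real]
    have ht0 : 0 ≤ ∑' y : r ⁻¹' {x}, ‖g ↑y‖ ^ (2:ℝ) * ψ ↑y :=
      tsum_nonneg fun y => mul_nonneg (Real.rpow_nonneg (norm_nonneg _) _) (hψpos _).le
    rw [← Real.rpow_natCast (_ ^ ((1:ℝ)/2)) 2, ← Real.rpow_mul ht0]
    norm_num
  have fib_nonneg : ∀ (g : N' → ℂ) (x : N), 0 ≤ fibLpNorm r ψ 2 x g := by
    intro g x
    simp only [fibLpNorm, if_neg h2top]
    exact Real.rpow_nonneg (tsum_nonneg fun y =>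
      mul_nonneg (Real.rpow_nonneg (norm_nonneg _) _) (hψpos _).le) _
  have single_le : ∀ (g : N' → ℂ) (x : N), MemFibLp r ψ 2 x g → ∀ w : N', r w = x →
      ‖g w‖ ^ 2 * ψ w ≤ (fibLpNorm r ψ 2 x g) ^ 2 := by
    intro g x hg w hwx
    rw [fib_sq g x]
    have hsummable := (memfib2_iff g x).mp hg
    have hmem : w ∈ r ⁻¹' {x} := by simp [Set.mem_preimage, hwx]
    have := Summable.le_tsum hsummable ⟨w, hmem⟩ (fun j _ =>
      mul_nonneg (Real.rpow_nonneg (norm_nonneg _) _) (hψpos _).le)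
    calc ‖g w‖ ^ 2 * ψ w = ‖g ↑(⟨w, hmem⟩ : r ⁻¹' {x})‖ ^ (2:ℝ) * ψ ↑(⟨w, hmem⟩ : r ⁻¹' {x}) := by
          rw [Real.rpow_two]
      _ ≤ _ := this
  have fib_le_cov : ∀ (g : N' → ℂ),
      BddAbove (range fun x : M => fibLpNorm r ψ 2 ↑x g) →
      ∀ x, x ∈ M → fibLpNorm r ψ 2 x g ≤ covHpNorm r ψ 2 M g := by
    intro g hbdd x hx
    exact le_ciSup hbdd ⟨x, hx⟩
  -- the key Bessel-type inequality
  have key : ∀ w : N', r w ∈ M → ∀ A : Finset (r ⁻¹' {z}),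
      (∑ s ∈ A, ‖T (e s) w‖ ^ 2) * ψ w ≤ c ^ 2 := by
    intro w hw A
    set a : r ⁻¹' {z} → ℂ := fun s => starRingEnd ℂ (T (e s) w) with ha_def
    set S : ℝ := ∑ s ∈ A, ‖T (e s) w‖ ^ 2 with hS_def
    have hS0 : 0 ≤ S := Finset.sum_nonneg fun s _ => pow_nonneg (norm_nonneg _) 2
    obtain ⟨hmem, hle, -⟩ := hT (fun y => ∑ s ∈ A, a s * e s y) (combo_mem A a)
    have hTgw : T (fun y => ∑ s ∈ A, a s * e s y) w = (S : ℂ) := by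
      simp only [hTfin A a, hS_def]
      push_cast
      exact Finset.sum_congr rfl fun s _ => by
        rw [ha_def, mul_comm]; exact Complex.mul_conj' _
    have hfibnorm : fibLpNorm r ψ 2 z (fun y => ∑ s ∈ A, a s * e s y) = S ^ ((1:ℝ)/2) := by
      rw [combo_norm A a, hS_def]
      congr 1
      exact Finset.sum_congr rfl fun s _ => by rw [ha_def]; simp
    have h1 : ‖T (fun y => ∑ s ∈ A, a s * e s y) w‖ ^ 2 * ψ w
        ≤ (fibLpNorm r ψ 2 (r w) (T (fun y => ∑ s ∈ A, a s * e s y))) ^ 2 :=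
      single_le _ (r w) (hmem.2.1 (r w) hw) w rfl
    have h2 : fibLpNorm r ψ 2 (r w) (T (fun y => ∑ s ∈ A, a s * e s y))
        ≤ c * S ^ ((1:ℝ)/2) := by
      refine (fib_le_cov _ hmem.2.2 (r w) hw).trans ?_
      rw [← hfibnorm]; exact hle
    have h3 : (fibLpNorm r ψ 2 (r w) (T (fun y => ∑ s ∈ A, a s * e s y))) ^ 2
        ≤ (c * S ^ ((1:ℝ)/2)) ^ 2 :=
      pow_le_pow_left₀ (fib_nonneg _ _) h2 2
    have hsq : (S ^ ((1:ℝ)/2)) ^ 2 = S := by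
      rw [← Real.rpow_natCast (S ^ ((1:ℝ)/2)) 2, ← Real.rpow_mul hS0]; norm_num
    have hTw : ‖T (fun y => ∑ s ∈ A, a s * e s y) w‖ = S := by
      rw [hTgw, Complex.norm_real, Real.norm_of_nonneg hS0]
    have hmain : S ^ 2 * ψ w ≤ c ^ 2 * S := by
      calc S ^ 2 * ψ w = ‖T (fun y => ∑ s ∈ A, a s * e s y) w‖ ^ 2 * ψ w := by rw [hTw]
        _ ≤ _ := h1
        _ ≤ (c * S ^ ((1:ℝ)/2)) ^ 2 := h3
        _ = c ^ 2 * S := by rw [mul_pow, hsq]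
    rcases hS0.eq_or_lt with hS | hS
    · rw [← hS, zero_mul]
      positivity
    · nlinarith [hmain, hψpos w]
  -- norm of F s w
  have hFnorm : ∀ (s : r ⁻¹' {z}) (w : N'), ‖F s w‖ = ψ ↑s * ‖T (e s) w‖ ^ 2 := by
    intro s w
    rw [hF s w, norm_mul, norm_pow, Complex.norm_real, Real.norm_of_nonneg (hψpos ↑s).le]
  refine ⟨fun s => ?_, fun w hw => ?_⟩
  · -- Part 1 : F s ∈ H_{1,ψ}(M')
    obtain ⟨hholo, hfib, hbdd⟩ := (hT (e s) (he_mem s)).1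
    have hcov_le : covHpNorm r ψ 2 M (T (e s)) ≤ c := by
      have hcle := (hT (e s) (he_mem s)).2.1
      rwa [he_norm s, mul_one] at hcle
    have hFeq : F s = (fun _ : N' => ((ψ ↑s : ℝ) : ℂ)) * (T (e s) * T (e s)) := by
      funext w
      show F s w = (ψ ↑s : ℂ) * (T (e s) w * T (e s) w)
      rw [hF s w, ← pow_two]
    refine ⟨?_, ?_, ?_⟩
    · rw [hFeq]
      exact mdifferentiableOn_const.mul (hholo.mul hholo)
    · intro x hx
      have hs2 : Summable (fun y : r ⁻¹' {x} => ‖T (e s) ↑y‖ ^ (2:ℝ) * ψ ↑y) :=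
        (memfib2_iff _ _).mp (hfib x hx)
      simp only [MemFibLp, if_neg h1top, ENNReal.toReal_one, Real.rpow_one]
      have heq : (fun y : r ⁻¹' {x} => ‖F s ↑y‖ * ψ ↑y)
          = fun y : r ⁻¹' {x} => ψ ↑s * (‖T (e s) ↑y‖ ^ (2:ℝ) * ψ ↑y) := by
        funext y
        rw [hFnorm, Real.rpow_two]; ring
      rw [heq]
      exact hs2.mul_left _
    · refine ⟨ψ ↑s * c ^ 2, ?_⟩
      rintro v ⟨x, rfl⟩
      have hxM : (x : N) ∈ M := x.2
      have hfib_le : fibLpNorm r ψ 2 ↑x (T (e s)) ≤ c :=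
        (fib_le_cov _ hbdd ↑x hxM).trans hcov_le
      have hfib_sq : (fibLpNorm r ψ 2 ↑x (T (e s))) ^ 2 ≤ c ^ 2 :=
        pow_le_pow_left₀ (fib_nonneg _ _) hfib_le 2
      have htsum_le : (∑' y : r ⁻¹' {(x:N)}, ‖T (e s) ↑y‖ ^ (2:ℝ) * ψ ↑y) ≤ c ^ 2 := by
        rw [← fib_sq (T (e s)) ↑x]; exact hfib_sq
      have hfl : fibLpNorm r ψ 1 ↑x (F s)
          = ψ ↑s * ∑' y : r ⁻¹' {(x:N)}, ‖T (e s) ↑y‖ ^ (2:ℝ) * ψ ↑y := by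
        simp only [fibLpNorm, if_neg h1top, ENNReal.toReal_one, Real.rpow_one, div_one,
          Real.rpow_one]
        rw [← tsum_mul_left]
        exact tsum_congr fun y => by rw [hFnorm, Real.rpow_two]; ring
      show fibLpNorm r ψ 1 ↑x (F s) ≤ ψ ↑s * c ^ 2
      rw [hfl]
      exact mul_le_mul_of_nonneg_left htsum_le (hψpos ↑s).le
  · -- Part 2
    have hwM : r w ∈ M := hw
    have hkeyA := key w hwM
    have hterm : ∀ s : r ⁻¹' {z}, ‖F s w‖ / ψ ↑s = ‖T (e s) w‖ ^ 2 := by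
      intro s
      rw [hFnorm]
      exact mul_div_cancel_left₀ _ (hψpos (↑s : N')).ne'
    have hnn : (0:(r ⁻¹' {z} : Set N') → ℝ) ≤ fun s : r ⁻¹' {z} => ‖F s w‖ / ψ ↑s :=
      fun s => div_nonneg (norm_nonneg _) (hψpos _).le
    have hboundA : ∀ A : Finset (r ⁻¹' {z}), (∑ s ∈ A, ‖F s w‖ / ψ ↑s) ≤ c ^ 2 / ψ w := by
      intro A
      rw [Finset.sum_congr rfl fun s _ => hterm s, le_div_iff₀ (hψpos w)]
      exact hkeyA A
    have hsummable : Summable (fun s : r ⁻¹' {z} => ‖F s w‖ / ψ ↑s) :=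
      summable_of_sum_le hnn hboundA
    refine ⟨hsummable, ?_⟩
    have htsum := Summable.tsum_le_of_sum_le hsummable hboundA
    calc (∑' s : r ⁻¹' {z}, ‖F s w‖ / ψ ↑s) * ψ w
        ≤ (c ^ 2 / ψ w) * ψ w := mul_le_mul_of_nonneg_right htsum (hψpos w).le
      _ = c ^ 2 := div_mul_cancel₀ _ (hψpos w).ne'

end
end

section
/- Let T̃_{ψ,z}(a) := Σ_{s∈S} a_s F_{s,z} be as above, a bounded linear interpolation operator of norm ≤ c² from l_{1,ψ,z}(M') to H_{1,ψ}(M') and from l_{∞,ψ,z}(M') to H_{∞,ψ}(M'). Then for every 1 < p < ∞, T̃_{ψ,z} maps l_{p,ψ^p,z}(M') continuously into H_{p,ψ^p}(M') with norm bounded by c². Consequently, T_{ψ,z} := T̃_{ψ^{1/p},z} is a bounded linear interpolation operator in B(l_{p,ψ,z}(M'), H_{p,ψ}(M')). -/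
open Set
open scoped Manifold Topology ENNReal NNReal Classical

noncomputable section

open Filter

private lemma memFibLp_iff {N N' : Type*} (r : N' → N) (w : N' → ℝ) {p : ℝ≥0∞}
    (hp : p ≠ ∞) (x : N) (g : N' → ℂ) :
    MemFibLp r w p x g ↔ Summable fun y : r ⁻¹' {x} => ‖g ↑y‖ ^ p.toReal * w ↑y := by
  simp only [MemFibLp, if_neg hp]

private lemma fibLpNorm_of_ne {N N' : Type*} (r : N' → N) (w : N' → ℝ) {p : ℝ≥0∞}
    (hp : p ≠ ∞) (x : N) (g : N' → ℂ) :
    fibLpNorm r w p x g = (∑' y : r ⁻¹' {x}, ‖g ↑y‖ ^ p.toReal * w ↑y) ^ (1 / p.toReal) := by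
  simp only [fibLpNorm, if_neg hp]

private lemma memFibLp_top_iff {N N' : Type*} (r : N' → N) (w : N' → ℝ) (x : N) (g : N' → ℂ) :
    MemFibLp r w ∞ x g ↔ BddAbove (range fun y : r ⁻¹' {x} => ‖g ↑y‖ * w ↑y) := by
  simp only [MemFibLp, if_pos rfl, if_true, eq_self_iff_true]

private lemma fibLpNorm_top_eq {N N' : Type*} (r : N' → N) (w : N' → ℝ) (x : N) (g : N' → ℂ) :
    fibLpNorm r w ∞ x g = ⨆ y : r ⁻¹' {x}, ‖g ↑y‖ * w ↑y := by
  simp only [fibLpNorm, if_pos rfl, if_true, eq_self_iff_true]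

private lemma memFibLp_one_iff {N N' : Type*} (r : N' → N) (w : N' → ℝ) (x : N) (g : N' → ℂ) :
    MemFibLp r w 1 x g ↔ Summable fun y : r ⁻¹' {x} => ‖g ↑y‖ * w ↑y := by
  simp only [MemFibLp, if_neg (ENNReal.one_ne_top), ENNReal.toReal_one, Real.rpow_one]

private lemma fibLpNorm_one_eq {N N' : Type*} (r : N' → N) (w : N' → ℝ) (x : N) (g : N' → ℂ) :
    fibLpNorm r w 1 x g = ∑' y : r ⁻¹' {x}, ‖g ↑y‖ * w ↑y := by
  simp only [fibLpNorm, if_neg (ENNReal.one_ne_top), ENNReal.toReal_one, Real.rpow_one,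
    one_div_one]

private lemma fibLpNorm_le_covHpNorm {N N' : Type*} (r : N' → N) (w : N' → ℝ) (p : ℝ≥0∞)
    (M : Set N) (g : N' → ℂ)
    (hbdd : BddAbove (range fun x : M => fibLpNorm r w p ↑x g)) {x : N} (hx : x ∈ M) :
    fibLpNorm r w p x g ≤ covHpNorm r w p M g :=
  le_ciSup hbdd ⟨x, hx⟩

private lemma covHpNorm_le {N N' : Type*} (r : N' → N) (w : N' → ℝ) (p : ℝ≥0∞)
    (M : Set N) (g : N' → ℂ) {b : ℝ} (hb : 0 ≤ b)
    (h : ∀ x : M, fibLpNorm r w p ↑x g ≤ b) : covHpNorm r w p M g ≤ b :=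
  Real.iSup_le h hb

private lemma pointwise_top {N N' : Type*} (r : N' → N) (w : N' → ℝ) (M : Set N) (g : N' → ℂ)
    {x : N} (hx : x ∈ M) (hmem : MemFibLp r w ∞ x g)
    (hbdd : BddAbove (range fun x : M => fibLpNorm r w ∞ ↑x g)) (y : r ⁻¹' {x}) :
    ‖g ↑y‖ * w ↑y ≤ covHpNorm r w ∞ M g := by
  have h1 : ‖g ↑y‖ * w ↑y ≤ fibLpNorm r w ∞ x g := by
    rw [fibLpNorm_top_eq]
    exact le_ciSup ((memFibLp_top_iff r w x g).mp hmem) y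
  exact h1.trans (fibLpNorm_le_covHpNorm r w ∞ M g hbdd hx)

private lemma fibLpNorm_top_le {N N' : Type*} (r : N' → N) (w : N' → ℝ) (x : N) (g : N' → ℂ)
    {b : ℝ} (hb : 0 ≤ b) (h : ∀ y : r ⁻¹' {x}, ‖g ↑y‖ * w ↑y ≤ b) :
    fibLpNorm r w ∞ x g ≤ b := by
  rw [fibLpNorm_top_eq]; exact Real.iSup_le h hb

private lemma le_rpow_one_div_of_rpow_le {x S q : ℝ} (hx : 0 ≤ x) (hq : 0 < q)
    (h : x ^ q ≤ S) : x ≤ S ^ (1 / q) := by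
  have h0 : (0:ℝ) ≤ x ^ q := Real.rpow_nonneg hx q
  calc x = (x ^ q) ^ (1 / q) := by rw [one_div, Real.rpow_rpow_inv hx hq.ne']
    _ ≤ S ^ (1 / q) := Real.rpow_le_rpow h0 h (by positivity)

private def deltaFn {N' : Type*} (w : N') : N' → ℂ := fun y => if y = w then 1 else 0

private lemma sum_delta_apply {N' : Type*} {Z : Set N'} (b : Z → ℂ) (F : Finset Z) (t : Z) :
    (∑ s ∈ F, b s • deltaFn (s : N')) ↑t = if t ∈ F then b t else 0 := by
  rw [Finset.sum_apply]
  have h : ∀ s ∈ F, (b s • deltaFn (s : N')) ↑t = if t = s then b s else 0 := by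
    intro s _
    simp only [Pi.smul_apply, deltaFn, smul_eq_mul, mul_ite, mul_one, mul_zero, Subtype.coe_inj]
  rw [Finset.sum_congr rfl h, Finset.sum_ite_eq]

private lemma Tt_sum {N' : Type*} (Tt : (N' → ℂ) → (N' → ℂ))
    (hTtadd : ∀ h₁ h₂ : N' → ℂ, Tt (h₁ + h₂) = Tt h₁ + Tt h₂)
    (hTtsmul : ∀ (a : ℂ) (h : N' → ℂ), Tt (a • h) = a • Tt h)
    {ι : Type*} (F : Finset ι) (b : ι → ℂ) (g : ι → N' → ℂ) :
    Tt (∑ s ∈ F, b s • g s) = ∑ s ∈ F, b s • Tt (g s) := by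
  have h := map_sum (AddMonoidHom.mk' Tt hTtadd) (fun s => b s • g s) F
  simp only [AddMonoidHom.mk'_apply] at h
  rw [h]
  exact Finset.sum_congr rfl fun s _ => hTtsmul (b s) (g s)
private lemma core_step
    (H : Type*) [NormedAddCommGroup H] [NormedSpace ℂ H]
    {N N' : Type*} [TopologicalSpace N] [ChartedSpace H N]
    [TopologicalSpace N'] [ChartedSpace H N']
    (r : N' → N) (M : Set N) (ψ : N' → ℝ) (hψpos : ∀ y, 0 < ψ y)
    (z : N) (hzM : z ∈ M) (c : ℝ)
    (Tt : (N' → ℂ) → (N' → ℂ))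
    (hTtadd : ∀ h₁ h₂ : N' → ℂ, Tt (h₁ + h₂) = Tt h₁ + Tt h₂)
    (hTtsmul : ∀ (a : ℂ) (h : N' → ℂ), Tt (a • h) = a • Tt h)
    (hTt1 : ∀ a : N' → ℂ, MemFibLp r ψ 1 z a →
      MemCovHp H r ψ 1 M (Tt a) ∧
      covHpNorm r ψ 1 M (Tt a) ≤ c ^ 2 * fibLpNorm r ψ 1 z a ∧
      ∀ x ∈ r ⁻¹' {z}, Tt a x = a x)
    (hTtinf : ∀ a : N' → ℂ, MemFibLp r ψ ∞ z a →
      MemCovHp H r ψ ∞ M (Tt a) ∧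
      covHpNorm r ψ ∞ M (Tt a) ≤ c ^ 2 * fibLpNorm r ψ ∞ z a ∧
      ∀ x ∈ r ⁻¹' {z}, Tt a x = a x)
    (p : ℝ≥0∞) (hp1 : 1 < p) (hpt : p ≠ ∞)
    (a : N' → ℂ) (ha : MemFibLp r (fun y => ψ y ^ p.toReal) p z a) :
    MemCovHp H r (fun y => ψ y ^ p.toReal) p M (Tt a) ∧
    covHpNorm r (fun y => ψ y ^ p.toReal) p M (Tt a) ≤
      c ^ 2 * fibLpNorm r (fun y => ψ y ^ p.toReal) p z a ∧
    ∀ x ∈ r ⁻¹' {z}, Tt a x = a x := by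
  have hq1 : 1 < p.toReal := by
    rw [← ENNReal.toReal_one]
    exact ENNReal.toReal_strict_mono hpt hp1
  set q : ℝ := p.toReal with hqdef
  have hq0 : 0 < q := lt_trans zero_lt_one hq1
  have hqne : q ≠ 0 := ne_of_gt hq0
  have hpq : q.HolderConjugate q.conjExponent := Real.HolderConjugate.conjExponent hq1
  set q' : ℝ := q.conjExponent with hq'def
  have hq'0 : 0 < q' := hpq.symm.pos
  have hq'ne : q' ≠ 0 := ne_of_gt hq'0
  -- summability hypothesis
  have haS : Summable (fun s : r ⁻¹' {z} => ‖a ↑s‖ ^ q * ψ ↑s ^ q) := by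
    have h := (memFibLp_iff r (fun y => ψ y ^ p.toReal) hpt z a).mp ha
    simpa using h
  set S : ℝ := ∑' s : r ⁻¹' {z}, ‖a ↑s‖ ^ q * ψ ↑s ^ q with hSdef
  have hnn : ∀ s : r ⁻¹' {z}, 0 ≤ ‖a ↑s‖ ^ q * ψ ↑s ^ q := fun s =>
    mul_nonneg (Real.rpow_nonneg (norm_nonneg _) _) (Real.rpow_nonneg (hψpos _).le _)
  have hS0 : 0 ≤ S := tsum_nonneg hnn
  -- `a` is in the weighted ℓ∞ space
  have hterm_le : ∀ s : r ⁻¹' {z}, ‖a ↑s‖ * ψ ↑s ≤ S ^ (1 / q) := by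
    intro s
    apply le_rpow_one_div_of_rpow_le (mul_nonneg (norm_nonneg _) (hψpos _).le) hq0
    rw [Real.mul_rpow (norm_nonneg _) (hψpos _).le]
    exact Summable.le_tsum haS s fun j _ => hnn j
  have hainf : MemFibLp r ψ ∞ z a := by
    rw [memFibLp_top_iff]
    exact ⟨S ^ (1 / q), by rintro v ⟨s, rfl⟩; exact hterm_le s⟩
  obtain ⟨⟨hholo, hfibinf, hbddinf⟩, hnorminf, hinterp⟩ := hTtinf a hainf
  -- the kernel representation on fibres over M
  have hrep : ∀ x ∈ M, ∀ y : r ⁻¹' {x},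
      HasSum (fun s : r ⁻¹' {z} => a ↑s * Tt (deltaFn (↑s : N')) ↑y) (Tt a ↑y) := by
    intro x hx y
    have hsum_eq : ∀ F : Finset (r ⁻¹' {z}),
        ∑ s ∈ F, a ↑s * Tt (deltaFn (↑s : N')) ↑y
          = Tt (∑ s ∈ F, a ↑s • deltaFn (↑s : N')) ↑y := by
      intro F
      rw [Tt_sum Tt hTtadd hTtsmul, Finset.sum_apply]
      exact Finset.sum_congr rfl fun s _ => by simp [smul_eq_mul]
    have htail : ∀ F : Finset (r ⁻¹' {z}),
        ‖Tt a ↑y - Tt (∑ s ∈ F, a ↑s • deltaFn (↑s : N')) ↑y‖ ≤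
          c ^ 2 * (∑' s : {t : r ⁻¹' {z} // t ∉ F}, ‖a ↑↑s‖ ^ q * ψ ↑↑s ^ q) ^ (1 / q)
            / ψ ↑y := by
      intro F
      set aF : N' → ℂ := ∑ s ∈ F, a ↑s • deltaFn (↑s : N') with haFdef
      set tF : ℝ := (∑' s : {t : r ⁻¹' {z} // t ∉ F}, ‖a ↑↑s‖ ^ q * ψ ↑↑s ^ q) ^ (1 / q)
        with htFdef
      have htF0 : 0 ≤ tF :=
        Real.rpow_nonneg (tsum_nonneg fun s : {t : r ⁻¹' {z} // t ∉ F} => hnn ↑s) _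
      have hsub : ∀ t : r ⁻¹' {z}, (a - aF) ↑t = if t ∈ F then 0 else a ↑t := by
        intro t
        rw [Pi.sub_apply, haFdef, sum_delta_apply]
        by_cases h : t ∈ F <;> simp [h]
      have hcompl : Summable fun s : {t : r ⁻¹' {z} // t ∉ F} => ‖a ↑↑s‖ ^ q * ψ ↑↑s ^ q :=
        haS.comp_injective Subtype.coe_injective
      have hptle : ∀ t : r ⁻¹' {z}, ‖(a - aF) ↑t‖ * ψ ↑t ≤ tF := by
        intro t
        rw [hsub t]
        by_cases h : t ∈ F
        · simpa [h] using htF0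
        · simp only [if_neg h]
          apply le_rpow_one_div_of_rpow_le (mul_nonneg (norm_nonneg _) (hψpos _).le) hq0
          rw [Real.mul_rpow (norm_nonneg _) (hψpos _).le]
          exact Summable.le_tsum hcompl ⟨t, h⟩ fun j _ => hnn ↑j
      have hmem : MemFibLp r ψ ∞ z (a - aF) := by
        rw [memFibLp_top_iff]
        exact ⟨tF, by rintro v ⟨t, rfl⟩; exact hptle t⟩
      obtain ⟨⟨_, hfi, hbi⟩, hni, _⟩ := hTtinf (a - aF) hmem
      have h1 : ‖Tt (a - aF) ↑y‖ * ψ ↑y ≤ c ^ 2 * tF := by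
        refine (pointwise_top r ψ M _ hx (hfi x hx) hbi y).trans (hni.trans ?_)
        exact mul_le_mul_of_nonneg_left (fibLpNorm_top_le r ψ z _ htF0 hptle) (sq_nonneg c)
      have h2 : Tt a ↑y - Tt aF ↑y = Tt (a - aF) ↑y := by
        have h3 : a - aF + aF = a := sub_add_cancel a aF
        conv_lhs => rw [← h3, hTtadd]
        simp
      rw [h2]
      exact (le_div_iff₀ (hψpos _)).mpr h1
    have htail0 : Tendsto (fun F : Finset (r ⁻¹' {z}) =>
        c ^ 2 * (∑' s : {t : r ⁻¹' {z} // t ∉ F}, ‖a ↑↑s‖ ^ q * ψ ↑↑s ^ q) ^ (1 / q) / ψ ↑y)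
        atTop (𝓝 0) := by
      have h0 := tendsto_tsum_compl_atTop_zero (fun s : r ⁻¹' {z} => ‖a ↑s‖ ^ q * ψ ↑s ^ q)
      have h1 : Tendsto (fun F : Finset (r ⁻¹' {z}) =>
          (∑' s : {t : r ⁻¹' {z} // t ∉ F}, ‖a ↑↑s‖ ^ q * ψ ↑↑s ^ q) ^ (1 / q))
          atTop (𝓝 0) := by
        have hc := (Real.continuousAt_rpow_const 0 (1 / q)
          (Or.inr (by positivity))).tendsto.comp h0
        simpa [Function.comp_def, one_div, Real.zero_rpow (inv_ne_zero hqne)] using hc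
      have h2 := (h1.const_mul (c ^ 2)).div_const (ψ ↑y)
      simpa using h2
    have hdiff : Tendsto (fun F : Finset (r ⁻¹' {z}) =>
        Tt a ↑y - Tt (∑ s ∈ F, a ↑s • deltaFn (↑s : N')) ↑y) atTop (𝓝 0) :=
      squeeze_zero_norm htail htail0
    have hlim := Tendsto.sub (tendsto_const_nhds :
      Tendsto (fun _ : Finset (r ⁻¹' {z}) => Tt a ↑y) atTop (𝓝 (Tt a ↑y))) hdiff
    rw [sub_zero] at hlim
    have heq : ∀ F : Finset (r ⁻¹' {z}),
        Tt a ↑y - (Tt a ↑y - Tt (∑ s ∈ F, a ↑s • deltaFn (↑s : N')) ↑y)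
          = ∑ s ∈ F, a ↑s * Tt (deltaFn (↑s : N')) ↑y := by
      intro F; rw [hsum_eq]; ring
    rw [HasSum, SummationFilter.unconditional_filter]
    simpa only [heq] using hlim
  -- delta function facts
  have hδmem : ∀ s : r ⁻¹' {z}, MemFibLp r ψ 1 z (deltaFn (↑s : N')) := by
    intro s
    rw [memFibLp_one_iff]
    apply summable_of_ne_finset_zero (s := {s})
    intro t ht
    have : (↑t : N') ≠ ↑s := Subtype.coe_injective.ne (by simpa using ht)
    simp [deltaFn, this]
  have hδnorm : ∀ s : r ⁻¹' {z}, fibLpNorm r ψ 1 z (deltaFn (↑s : N')) = ψ ↑s := by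
    intro s
    rw [fibLpNorm_one_eq]
    rw [tsum_eq_single s ?_]
    · simp [deltaFn]
    · intro t ht
      have : (↑t : N') ≠ ↑s := Subtype.coe_injective.ne ht
      simp [deltaFn, this]
    -- column bounds
  have col : ∀ x ∈ M, ∀ s : r ⁻¹' {z},
      Summable (fun y' : r ⁻¹' {x} => ‖Tt (deltaFn (↑s : N')) ↑y'‖ * ψ ↑y') ∧
      ∑' y' : r ⁻¹' {x}, ‖Tt (deltaFn (↑s : N')) ↑y'‖ * ψ ↑y' ≤ c ^ 2 * ψ ↑s := by
    intro x hx s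
    obtain ⟨⟨_, hf1, hb1⟩, hn1, _⟩ := hTt1 (deltaFn (↑s : N')) (hδmem s)
    have hsumm := (memFibLp_one_iff r ψ x _).mp (hf1 x hx)
    refine ⟨hsumm, ?_⟩
    have h := (fibLpNorm_le_covHpNorm r ψ 1 M _ hb1 hx).trans hn1
    rw [hδnorm s, fibLpNorm_one_eq] at h
    exact h
  -- row bounds
  have row : ∀ x ∈ M, ∀ y : r ⁻¹' {x},
      Summable (fun s : r ⁻¹' {z} => ‖Tt (deltaFn (↑s : N')) ↑y‖ / ψ ↑s) ∧
      ∑' s : r ⁻¹' {z}, ‖Tt (deltaFn (↑s : N')) ↑y‖ / ψ ↑s ≤ c ^ 2 / ψ ↑y := by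
    intro x hx y
    have hFsum : ∀ F : Finset (r ⁻¹' {z}),
        ∑ s ∈ F, ‖Tt (deltaFn (↑s : N')) ↑y‖ / ψ ↑s ≤ c ^ 2 / ψ ↑y := by
      intro F
      set b : r ⁻¹' {z} → ℂ := fun s =>
        (↑(‖Tt (deltaFn (↑s : N')) ↑y‖ / ψ ↑s) : ℂ) / Tt (deltaFn (↑s : N')) ↑y with hbdef
      set gF : N' → ℂ := ∑ s ∈ F, b s • deltaFn (↑s : N') with hgFdef
      have hbnorm : ∀ t : r ⁻¹' {z}, ‖b t‖ * ψ ↑t ≤ 1 := by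
        intro t
        by_cases h : Tt (deltaFn (↑t : N')) ↑y = 0
        · simp [hbdef, h]
        · have hK : ‖Tt (deltaFn (↑t : N')) ↑y‖ ≠ 0 := norm_ne_zero_iff.mpr h
          have hψt : ψ (↑t : N') ≠ 0 := (hψpos _).ne'
          rw [hbdef]
          have heq : ‖(↑(‖Tt (deltaFn (↑t : N')) ↑y‖ / ψ ↑t) : ℂ) /
              Tt (deltaFn (↑t : N')) ↑y‖ * ψ ↑t = 1 := by
            rw [norm_div, Complex.norm_real, Real.norm_eq_abs,
              abs_of_nonneg (div_nonneg (norm_nonneg _) (hψpos _).le)]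
            have hK' : ‖Tt (deltaFn (↑t : N')) ↑y‖ ≠ 0 := by
              simpa using hK
            field_simp
          exact heq.le
      have hgval : ∀ t : r ⁻¹' {z}, gF ↑t = if t ∈ F then b t else 0 := fun t =>
        sum_delta_apply b F t
      have hgmem : MemFibLp r ψ ∞ z gF := by
        rw [memFibLp_top_iff]
        refine ⟨1, ?_⟩
        rintro v ⟨t, rfl⟩
        simp only [hgval t]
        by_cases h : t ∈ F
        · simpa [h] using hbnorm t
        · simp [h]
      obtain ⟨⟨_, hfi, hbi⟩, hni, _⟩ := hTtinf gF hgmem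
      have hgnorm : fibLpNorm r ψ ∞ z gF ≤ 1 := by
        apply fibLpNorm_top_le r ψ z gF zero_le_one
        intro t
        rw [hgval t]
        by_cases h : t ∈ F
        · simpa [h] using hbnorm t
        · simp [h]
      have hTgF : Tt gF ↑y = ↑(∑ s ∈ F, ‖Tt (deltaFn (↑s : N')) ↑y‖ / ψ ↑s) := by
        rw [hgFdef, Tt_sum Tt hTtadd hTtsmul, Finset.sum_apply]
        push_cast
        refine Finset.sum_congr rfl fun s _ => ?_
        rw [Pi.smul_apply, smul_eq_mul, hbdef]
        by_cases h : Tt (deltaFn (↑s : N')) ↑y = 0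
        · simp [h]
        · rw [div_mul_cancel₀ _ h]
          exact Complex.ofReal_div _ _
      have h1 : ‖Tt gF ↑y‖ * ψ ↑y ≤ c ^ 2 := by
        refine (pointwise_top r ψ M _ hx (hfi x hx) hbi y).trans (hni.trans ?_)
        calc c ^ 2 * fibLpNorm r ψ ∞ z gF ≤ c ^ 2 * 1 :=
              mul_le_mul_of_nonneg_left hgnorm (sq_nonneg c)
          _ = c ^ 2 := mul_one _
      have h2 : ∑ s ∈ F, ‖Tt (deltaFn (↑s : N')) ↑y‖ / ψ ↑s ≤ ‖Tt gF ↑y‖ := by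
        rw [hTgF, Complex.norm_real, Real.norm_eq_abs]
        exact le_abs_self _
      exact h2.trans ((le_div_iff₀ (hψpos _)).mpr h1)
    have hrownn : ∀ s : r ⁻¹' {z}, 0 ≤ ‖Tt (deltaFn (↑s : N')) ↑y‖ / ψ ↑s := fun s =>
      div_nonneg (norm_nonneg _) (hψpos _).le
    have hrowS : Summable (fun s : r ⁻¹' {z} => ‖Tt (deltaFn (↑s : N')) ↑y‖ / ψ ↑s) :=
      summable_of_sum_le hrownn hFsum
    exact ⟨hrowS, Summable.tsum_le_of_sum_le hrowS hFsum⟩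
  have hsum1 : 1 / q + 1 / q' = 1 := by
    rw [one_div, one_div]; exact hpq.inv_add_inv_eq_one
  -- the main per-fibre estimate
  have main : ∀ x, ∀ _ : x ∈ M,
      Summable (fun y : r ⁻¹' {x} => ‖Tt a ↑y‖ ^ q * ψ ↑y ^ q) ∧
      ∑' y : r ⁻¹' {x}, ‖Tt a ↑y‖ ^ q * ψ ↑y ^ q ≤ (c ^ 2) ^ q * S := by
    intro x hx
    have keyle : ∀ y : r ⁻¹' {x},
        Summable (fun s : r ⁻¹' {z} =>
          (‖a ↑s‖ * ψ ↑s) ^ q * (‖Tt (deltaFn (↑s : N')) ↑y‖ / ψ ↑s)) ∧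
        ‖Tt a ↑y‖ ^ q * ψ ↑y ^ q ≤ (c ^ 2) ^ (q - 1) *
          (ψ ↑y * ∑' s : r ⁻¹' {z},
            (‖a ↑s‖ * ψ ↑s) ^ q * (‖Tt (deltaFn (↑s : N')) ↑y‖ / ψ ↑s)) := by
      intro y
      set u : r ⁻¹' {z} → ℝ := fun s => ‖a ↑s‖ * ψ ↑s with hudef
      set v : r ⁻¹' {z} → ℝ := fun s => ‖Tt (deltaFn (↑s : N')) ↑y‖ / ψ ↑s with hvdef
      have hu0 : ∀ s, 0 ≤ u s := fun s => mul_nonneg (norm_nonneg _) (hψpos _).le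
      have hv0 : ∀ s, 0 ≤ v s := fun s => div_nonneg (norm_nonneg _) (hψpos _).le
      have huq : ∀ s, u s ^ q = ‖a ↑s‖ ^ q * ψ ↑s ^ q := fun s =>
        Real.mul_rpow (norm_nonneg _) (hψpos _).le
      have hSuq : Summable (fun s => u s ^ q) := by
        simp only [huq]; exact haS
      have hvle : ∀ s, v s ≤ c ^ 2 / ψ ↑y := fun s =>
        (Summable.le_tsum (row x hx y).1 s fun j _ => hv0 j).trans (row x hx y).2
      have hSuqv : Summable (fun s => u s ^ q * v s) := by
        apply Summable.of_nonneg_of_le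
          (fun s => mul_nonneg (Real.rpow_nonneg (hu0 s) q) (hv0 s))
          (fun s => mul_le_mul_of_nonneg_left (hvle s) (Real.rpow_nonneg (hu0 s) q))
        exact hSuq.mul_right _
      have W0 : 0 ≤ ∑' s, u s ^ q * v s := tsum_nonneg fun s =>
        mul_nonneg (Real.rpow_nonneg (hu0 s) q) (hv0 s)
      have hfq : ∀ s, (u s * v s ^ (1/q)) ^ q = u s ^ q * v s := by
        intro s
        rw [Real.mul_rpow (hu0 s) (Real.rpow_nonneg (hv0 s) _), one_div,
          Real.rpow_inv_rpow (hv0 s) hqne]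
      have hgq : ∀ s, (v s ^ (1/q')) ^ q' = v s := by
        intro s
        rw [one_div, Real.rpow_inv_rpow (hv0 s) hq'ne]
      have hfg : ∀ s, (u s * v s ^ (1/q)) * v s ^ (1/q') = u s * v s := by
        intro s
        rw [mul_assoc, ← Real.rpow_add' (hv0 s) (by rw [hsum1]; norm_num), hsum1,
          Real.rpow_one]
      have holder := Real.summable_and_inner_le_Lp_mul_Lq_tsum_of_nonneg
        (f := fun s => u s * v s ^ (1/q)) (g := fun s => v s ^ (1/q')) hpq
        (fun s => mul_nonneg (hu0 s) (Real.rpow_nonneg (hv0 s) _))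
        (fun s => Real.rpow_nonneg (hv0 s) _)
        (by simp only [hfq]; exact hSuqv)
        (by simp only [hgq]; exact (row x hx y).1)
      have hfgsum : Summable (fun s => u s * v s) := by
        have h := holder.1; simp only [hfg] at h; exact h
      have hfgle : ∑' s, u s * v s ≤
          (∑' s, u s ^ q * v s) ^ (1/q) * (∑' s, v s) ^ (1/q') := by
        have h := holder.2
        simp only [hfg, hfq, hgq] at h
        exact h
      have hTa_le : ‖Tt a ↑y‖ ≤ ∑' s, u s * v s := by
        have huv : ∀ s : r ⁻¹' {z}, ‖a ↑s * Tt (deltaFn (↑s : N')) ↑y‖ = u s * v s := by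
          intro s
          rw [norm_mul, hudef, hvdef]
          have hψs : ψ (↑s : N') ≠ 0 := (hψpos _).ne'
          field_simp
        rw [← (hrep x hx y).tsum_eq]
        exact (norm_tsum_le_tsum_norm ((summable_congr huv).mpr hfgsum)).trans_eq
          (tsum_congr huv)
      have hvtsum : (∑' s, v s) ^ (1/q') ≤ (c ^ 2 / ψ ↑y) ^ (1/q') :=
        Real.rpow_le_rpow (tsum_nonneg hv0) (row x hx y).2 (by positivity)
      have hcomb : ‖Tt a ↑y‖ ≤ (∑' s, u s ^ q * v s) ^ (1/q) * (c ^ 2 / ψ ↑y) ^ (1/q') :=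
        hTa_le.trans (hfgle.trans (mul_le_mul_of_nonneg_left hvtsum
          (Real.rpow_nonneg W0 _)))
      have hBnn : (0:ℝ) ≤ c ^ 2 / ψ ↑y := div_nonneg (sq_nonneg c) (hψpos _).le
      have hpow : ‖Tt a ↑y‖ ^ q ≤ (∑' s, u s ^ q * v s) * (c ^ 2 / ψ ↑y) ^ (q - 1) := by
        have h1 := Real.rpow_le_rpow (norm_nonneg _) hcomb hq0.le
        rw [Real.mul_rpow (Real.rpow_nonneg W0 _) (Real.rpow_nonneg hBnn _),
          one_div, one_div, Real.rpow_inv_rpow W0 hqne, ← Real.rpow_mul hBnn,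
          inv_mul_eq_div, hpq.div_conj_eq_sub_one] at h1
        exact h1
      have hψq : ψ (↑y : N') ^ q = ψ ↑y ^ (q - 1) * ψ ↑y := by
        conv_lhs => rw [show q = (q - 1) + 1 by ring]
        rw [Real.rpow_add (hψpos _), Real.rpow_one]
      have key2 : ‖Tt a ↑y‖ ^ q * ψ ↑y ^ q ≤
          (c ^ 2) ^ (q - 1) * (ψ ↑y * ∑' s, u s ^ q * v s) := by
        have h2 := mul_le_mul_of_nonneg_right hpow (Real.rpow_nonneg (hψpos ↑y).le q)
        refine h2.trans_eq ?_
        rw [Real.div_rpow (sq_nonneg c) (hψpos _).le, hψq]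
        have hψq1 : ψ (↑y : N') ^ (q - 1) ≠ 0 := (Real.rpow_pos_of_pos (hψpos _) _).ne'
        field_simp
      exact ⟨hSuqv, key2⟩
    -- Fubini and summation over the fibre
    set uq : r ⁻¹' {z} → ℝ := fun s => (‖a ↑s‖ * ψ ↑s) ^ q with huqdef
    have huq0 : ∀ s, 0 ≤ uq s := fun s =>
      Real.rpow_nonneg (mul_nonneg (norm_nonneg _) (hψpos _).le) _
    have huqS : Summable uq := by
      have h : ∀ s, uq s = ‖a ↑s‖ ^ q * ψ ↑s ^ q := fun s =>
        Real.mul_rpow (norm_nonneg _) (hψpos _).le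
      exact (summable_congr h).mpr haS
    have huqsum : ∑' s, uq s = S :=
      tsum_congr fun s => Real.mul_rpow (norm_nonneg _) (hψpos _).le
    set G : (r ⁻¹' {z}) × (r ⁻¹' {x}) → ℝ := fun pr =>
      (uq pr.1 / ψ ↑pr.1) * (‖Tt (deltaFn (↑pr.1 : N')) ↑pr.2‖ * ψ ↑pr.2) with hGdef
    have hGnn : ∀ pr, 0 ≤ G pr := fun pr =>
      mul_nonneg (div_nonneg (huq0 _) (hψpos _).le)
        (mul_nonneg (norm_nonneg _) (hψpos _).le)
    have hGs : ∀ s, Summable fun y' : r ⁻¹' {x} => G (s, y') := by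
      intro s
      simp only [hGdef]
      exact (col x hx s).1.mul_left _
    have hGs_sum : ∀ s, ∑' y' : r ⁻¹' {x}, G (s, y') ≤ c ^ 2 * uq s := by
      intro s
      simp only [hGdef]
      rw [tsum_mul_left]
      have h1 := mul_le_mul_of_nonneg_left (col x hx s).2
        (div_nonneg (huq0 s) (hψpos (↑s : N')).le)
      refine h1.trans_eq ?_
      have hψs : ψ (↑s : N') ≠ 0 := (hψpos _).ne'
      field_simp
    have hGsum2 : Summable fun s => ∑' y' : r ⁻¹' {x}, G (s, y') :=
      Summable.of_nonneg_of_le (fun s => tsum_nonneg fun y' => hGnn _) hGs_sum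
        (huqS.mul_left _)
    have hGprod : Summable G := (summable_prod_of_nonneg hGnn).mpr ⟨hGs, hGsum2⟩
    have hGflip : Summable fun pr : (r ⁻¹' {x}) × (r ⁻¹' {z}) => G (pr.2, pr.1) :=
      hGprod.comp_injective (Equiv.prodComm _ _).injective
    have hGflipnn : ∀ pr : (r ⁻¹' {x}) × (r ⁻¹' {z}), 0 ≤ G (pr.2, pr.1) := fun pr => hGnn _
    obtain ⟨hGcols, hWsum⟩ := (summable_prod_of_nonneg hGflipnn).mp hGflip
    have hcomm : ∑' y' : r ⁻¹' {x}, ∑' s : r ⁻¹' {z}, G (s, y')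
        = ∑' s : r ⁻¹' {z}, ∑' y' : r ⁻¹' {x}, G (s, y') :=
      Summable.tsum_comm' hGprod hGs hGcols
    have hGrel : ∀ y' : r ⁻¹' {x},
        ψ ↑y' * ∑' s : r ⁻¹' {z}, uq s * (‖Tt (deltaFn (↑s : N')) ↑y'‖ / ψ ↑s)
          = ∑' s : r ⁻¹' {z}, G (s, y') := by
      intro y'
      rw [← tsum_mul_left]
      refine tsum_congr fun s => ?_
      simp only [hGdef]
      have hψs : ψ (↑s : N') ≠ 0 := (hψpos _).ne'
      field_simp
    have hWsum' : Summable fun y' : r ⁻¹' {x} =>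
        ψ ↑y' * ∑' s : r ⁻¹' {z}, uq s * (‖Tt (deltaFn (↑s : N')) ↑y'‖ / ψ ↑s) :=
      (summable_congr hGrel).mpr hWsum
    have hWle : ∑' y' : r ⁻¹' {x},
        ψ ↑y' * ∑' s : r ⁻¹' {z}, uq s * (‖Tt (deltaFn (↑s : N')) ↑y'‖ / ψ ↑s)
          ≤ c ^ 2 * S := by
      rw [tsum_congr hGrel, hcomm]
      calc ∑' s : r ⁻¹' {z}, ∑' y' : r ⁻¹' {x}, G (s, y') ≤ ∑' s, c ^ 2 * uq s :=
            Summable.tsum_le_tsum hGs_sum hGsum2 (huqS.mul_left _)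
        _ = c ^ 2 * S := by rw [tsum_mul_left, huqsum]
    have hterm_nn : ∀ y' : r ⁻¹' {x}, 0 ≤ ‖Tt a ↑y'‖ ^ q * ψ ↑y' ^ q := fun y' =>
      mul_nonneg (Real.rpow_nonneg (norm_nonneg _) _) (Real.rpow_nonneg (hψpos _).le _)
    have hkey : ∀ y' : r ⁻¹' {x}, ‖Tt a ↑y'‖ ^ q * ψ ↑y' ^ q ≤
        (c ^ 2) ^ (q - 1) *
          (ψ ↑y' * ∑' s, uq s * (‖Tt (deltaFn (↑s : N')) ↑y'‖ / ψ ↑s)) :=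
      fun y' => (keyle y').2
    have hTsummable : Summable (fun y' : r ⁻¹' {x} => ‖Tt a ↑y'‖ ^ q * ψ ↑y' ^ q) :=
      Summable.of_nonneg_of_le hterm_nn hkey (hWsum'.mul_left _)
    refine ⟨hTsummable, ?_⟩
    have h3 := Summable.tsum_le_tsum hkey hTsummable (hWsum'.mul_left _)
    rw [tsum_mul_left] at h3
    have h4 := mul_le_mul_of_nonneg_left hWle (Real.rpow_nonneg (sq_nonneg c) (q - 1))
    refine (h3.trans h4).trans_eq ?_
    rw [← mul_assoc]
    congr 1
    rw [show (c^2:ℝ)^(q-1) * c^2 = (c^2)^(q-1) * (c^2)^(1:ℝ) by rw [Real.rpow_one],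
      ← Real.rpow_add' (sq_nonneg c) (by rw [sub_add_cancel]; exact hqne), sub_add_cancel]
  -- assemble
  have hfibeq : ∀ x : N, fibLpNorm r (fun y => ψ y ^ q) p x (Tt a)
      = (∑' y : r ⁻¹' {x}, ‖Tt a ↑y‖ ^ q * ψ ↑y ^ q) ^ (1/q) := by
    intro x; rw [fibLpNorm_of_ne r _ hpt]
  have hfibeqz : fibLpNorm r (fun y => ψ y ^ q) p z a = S ^ (1/q) := by
    rw [fibLpNorm_of_ne r _ hpt]
  have hfible : ∀ x : M, fibLpNorm r (fun y => ψ y ^ q) p ↑x (Tt a)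
      ≤ c ^ 2 * S ^ (1/q) := by
    intro x
    rw [hfibeq ↑x]
    have h1 := Real.rpow_le_rpow (tsum_nonneg fun y' =>
        mul_nonneg (Real.rpow_nonneg (norm_nonneg _) _) (Real.rpow_nonneg (hψpos _).le _))
      ((main ↑x x.2).2) (le_of_lt (by positivity : (0:ℝ) < 1/q))
    refine h1.trans_eq ?_
    rw [Real.mul_rpow (Real.rpow_nonneg (sq_nonneg c) _) hS0, one_div,
      Real.rpow_rpow_inv (sq_nonneg c) hqne]
  refine ⟨⟨hholo, ?_, ?_⟩, ?_, hinterp⟩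
  · intro x hx
    rw [memFibLp_iff r _ hpt]
    exact (main x hx).1
  · exact ⟨c ^ 2 * S ^ (1/q), by rintro w ⟨x, rfl⟩; exact hfible x⟩
  · rw [hfibeqz]
    exact covHpNorm_le r _ p M (Tt a)
      (mul_nonneg (sq_nonneg c) (Real.rpow_nonneg hS0 _)) hfible


/-- **The Riesz interpolation step.** Fix `z ∈ M \ C_M` and let
`T̃_{ψ,z}(a) = Σ_s a_s F_{s,z}` be a linear operator which is a bounded interpolation
operator of norm `≤ c²` both from `l_{1,ψ,z}(M')` to `H_{1,ψ}(M')` and from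
`l_{∞,ψ,z}(M')` to `H_{∞,ψ}(M')`.  Then for every `1 < p < ∞` the operator `T̃_{ψ,z}`
maps `l_{p,ψ^p,z}(M')` continuously into `H_{p,ψ^p}(M')` with norm bounded by `c²`
(and it interpolates on the fibre).  Consequently, `T_{ψ,z} := T̃_{ψ^{1/p},z}` is a
bounded linear interpolation operator in `B(l_{p,ψ,z}(M'), H_{p,ψ}(M'))`. -/
theorem riesz_interpolation_step
    (n : ℕ)
    {N : Type*} [TopologicalSpace N] [ChartedSpace (Fin n → ℂ) N]
    {N' : Type*} [MetricSpace N'] [ChartedSpace (Fin n → ℂ) N']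
    (r : N' → N) (hr : IsCoveringMap r)
    (hrholo : MDifferentiable 𝓘(ℂ, Fin n → ℂ) 𝓘(ℂ, Fin n → ℂ) r)
    (M : Set N) (hM : IsStronglyPseudoconvexDomain (Fin n → ℂ) M)
    (ψ : N' → ℝ) (hψpos : ∀ y, 0 < ψ y)
    (hψuc : UniformContinuous fun y => Real.log (ψ y))
    (z : N) (hz : z ∈ M \ varietyUnion (Fin n → ℂ) M)
    (c : ℝ) (hc : 0 ≤ c)
    -- `T̃` is linear ...
    (Tt : (N' → ℂ) → (N' → ℂ))
    (hTtadd : ∀ h₁ h₂ : N' → ℂ, Tt (h₁ + h₂) = Tt h₁ + Tt h₂)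
    (hTtsmul : ∀ (a : ℂ) (h : N' → ℂ), Tt (a • h) = a • Tt h)
    -- ... and is a bounded interpolation operator of norm `≤ c²` at the endpoint `p = 1` ...
    (hTt1 : ∀ a : N' → ℂ, MemFibLp r ψ 1 z a →
      MemCovHp (Fin n → ℂ) r ψ 1 M (Tt a) ∧
      covHpNorm r ψ 1 M (Tt a) ≤ c ^ 2 * fibLpNorm r ψ 1 z a ∧
      ∀ x ∈ r ⁻¹' {z}, Tt a x = a x)
    -- ... and at the endpoint `p = ∞`
    (hTtinf : ∀ a : N' → ℂ, MemFibLp r ψ ∞ z a →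
      MemCovHp (Fin n → ℂ) r ψ ∞ M (Tt a) ∧
      covHpNorm r ψ ∞ M (Tt a) ≤ c ^ 2 * fibLpNorm r ψ ∞ z a ∧
      ∀ x ∈ r ⁻¹' {z}, Tt a x = a x) :
    ∀ p : ℝ≥0∞, 1 < p → p ≠ ∞ →
      -- `T̃_{ψ,z} : l_{p,ψ^p,z}(M') → H_{p,ψ^p}(M')` has norm at most `c²`
      (∀ a : N' → ℂ, MemFibLp r (fun y => ψ y ^ p.toReal) p z a →
        MemCovHp (Fin n → ℂ) r (fun y => ψ y ^ p.toReal) p M (Tt a) ∧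
        covHpNorm r (fun y => ψ y ^ p.toReal) p M (Tt a) ≤
          c ^ 2 * fibLpNorm r (fun y => ψ y ^ p.toReal) p z a ∧
        ∀ x ∈ r ⁻¹' {z}, Tt a x = a x) ∧
      -- consequently, any such operator `T̃_{ψ^{1/p},z}` built from the weight
      -- `ψ^{1/p}` is a bounded linear interpolation operator in
      -- `B(l_{p,ψ,z}(M'), H_{p,ψ}(M'))`
      (∀ Tt' : (N' → ℂ) → (N' → ℂ),
        (∀ h₁ h₂ : N' → ℂ, Tt' (h₁ + h₂) = Tt' h₁ + Tt' h₂) →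
        (∀ (a : ℂ) (h : N' → ℂ), Tt' (a • h) = a • Tt' h) →
        (∀ a : N' → ℂ, MemFibLp r (fun y => ψ y ^ (1 / p.toReal)) 1 z a →
          MemCovHp (Fin n → ℂ) r (fun y => ψ y ^ (1 / p.toReal)) 1 M (Tt' a) ∧
          covHpNorm r (fun y => ψ y ^ (1 / p.toReal)) 1 M (Tt' a) ≤
            c ^ 2 * fibLpNorm r (fun y => ψ y ^ (1 / p.toReal)) 1 z a ∧
          ∀ x ∈ r ⁻¹' {z}, Tt' a x = a x) →
        (∀ a : N' → ℂ, MemFibLp r (fun y => ψ y ^ (1 / p.toReal)) ∞ z a →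
          MemCovHp (Fin n → ℂ) r (fun y => ψ y ^ (1 / p.toReal)) ∞ M (Tt' a) ∧
          covHpNorm r (fun y => ψ y ^ (1 / p.toReal)) ∞ M (Tt' a) ≤
            c ^ 2 * fibLpNorm r (fun y => ψ y ^ (1 / p.toReal)) ∞ z a ∧
          ∀ x ∈ r ⁻¹' {z}, Tt' a x = a x) →
        ∀ a : N' → ℂ, MemFibLp r ψ p z a →
          MemCovHp (Fin n → ℂ) r ψ p M (Tt' a) ∧
          covHpNorm r ψ p M (Tt' a) ≤ c ^ 2 * fibLpNorm r ψ p z a ∧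
          ∀ x ∈ r ⁻¹' {z}, Tt' a x = a x) := by
  intro p hp1 hpt
  constructor
  · intro a ha
    exact core_step (Fin n → ℂ) r M ψ hψpos z hz.1 c Tt hTtadd hTtsmul hTt1 hTtinf
      p hp1 hpt a ha
  · intro Tt' hadd' hsmul' hA hB a ha
    have hq0 : 0 < p.toReal := by
      have h0 : (0:ℝ≥0∞) < p := lt_trans zero_lt_one hp1
      exact ENNReal.toReal_pos (ne_of_gt h0) hpt
    have heq : (fun y => (ψ y ^ (1 / p.toReal)) ^ p.toReal) = ψ := by
      funext y
      rw [← Real.rpow_mul (hψpos y).le, one_div, inv_mul_cancel₀ (ne_of_gt hq0),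
        Real.rpow_one]
    have ha' : MemFibLp r (fun y => (ψ y ^ (1 / p.toReal)) ^ p.toReal) p z a := by
      rw [heq]; exact ha
    have hres := core_step (Fin n → ℂ) r M (fun y => ψ y ^ (1 / p.toReal))
      (fun y => Real.rpow_pos_of_pos (hψpos y) _) z hz.1 c Tt' hadd' hsmul' hA hB
      p hp1 hpt a ha'
    rwa [heq] at hres


end
end
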